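/- Let p = log_2 6. For all real a₀, a₁ ≥ 0, one has a₀^p + 4(a₀a₁)^(p/2) + a₁^p ≤ (a₀ + a₁)^p. -/

import Mathlib

open Real

private lemma log2_pos : (0:ℝ) < Real.log 2 := Real.log_pos (by norm_num)

private lemma c_lb : (14:ℝ)/9 ≤ Real.log 3 / Real.log 2 := by
  rw [le_div_iff₀ log2_pos]
  have h : Real.log ((2:ℝ)^(14:ℕ)) ≤ Real.log ((3:ℝ)^(9:ℕ)) :=
    Real.log_le_log (by positivity) (by norm_num)
  rw [Real.log_pow, Real.log_pow] at h
  push_cast at h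
  linarith

private lemma c_ub : Real.log 3 / Real.log 2 ≤ (21:ℝ)/13 := by
  rw [div_le_iff₀ log2_pos]
  have h : Real.log ((3:ℝ)^(13:ℕ)) ≤ Real.log ((2:ℝ)^(21:ℕ)) :=
    Real.log_le_log (by positivity) (by norm_num)
  rw [Real.log_pow, Real.log_pow] at h
  push_cast at h
  linarith

private lemma hnum : Real.log ((39:ℝ)/25) ≤ (14/9) * Real.log (4/3) := by
  have h : Real.log (((39:ℝ)/25)^(9:ℕ)) ≤ Real.log (((4:ℝ)/3)^(14:ℕ)) :=
    Real.log_le_log (by positivity) (by norm_num)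
  rw [Real.log_pow, Real.log_pow] at h
  push_cast at h
  linarith

/-- Main calculus lemma: `(1+q)^(log 3 / log 2) ≥ 1 + q + q²` on `[0,1]`. -/
private lemma lemA (q : ℝ) (h0 : 0 ≤ q) (h1 : q ≤ 1) :
    1 + q + q^2 ≤ (1+q) ^ (Real.log 3 / Real.log 2) := by
  set c := Real.log 3 / Real.log 2 with hc
  set f : ℝ → ℝ := fun x => c * Real.log (1+x) - Real.log (1+x+x^2) with hf
  have hderiv : ∀ x : ℝ, 0 ≤ x →
      HasDerivAt f (c/(1+x) - (1+2*x)/(1+x+x^2)) x := by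
    intro x hx
    have h1x : (0:ℝ) < 1 + x := by linarith
    have h2x : (0:ℝ) < 1 + x + x^2 := by nlinarith
    have d1 : HasDerivAt (fun y : ℝ => 1 + y) 1 x := by
      simpa using (hasDerivAt_id x).const_add (1:ℝ)
    have d2 : HasDerivAt (fun y : ℝ => 1 + y + y^2) (1 + 2*x) x := by
      have h := d1.add (hasDerivAt_pow 2 x)
      refine h.congr_deriv ?_
      push_cast
      ring
    have dlog1 : HasDerivAt (fun y : ℝ => Real.log (1+y)) (1/(1+x)) x :=
      d1.log h1x.ne'
    have dlog2 : HasDerivAt (fun y : ℝ => Real.log (1+y+y^2)) ((1+2*x)/(1+x+x^2)) x :=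
      d2.log h2x.ne'
    have h := (dlog1.const_mul c).sub dlog2
    refine h.congr_deriv ?_
    ring
  have hf0 : f 0 = 0 := by simp [hf]
  have hf1 : f 1 = 0 := by
    have e1 : (1:ℝ) + 1 = 2 := by norm_num
    have e2 : (1:ℝ) + 1 + 1^2 = 3 := by norm_num
    simp only [hf, e1, e2]
    rw [hc, div_mul_cancel₀ _ log2_pos.ne']
    ring
  have hc20 : (20:ℝ)/13 ≤ c := le_trans (by norm_num) c_lb
  have key : 0 ≤ f q := by
    rcases le_or_gt q (1/3) with hq | hq
    · -- increasing on [0, 1/3]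
      have mono : MonotoneOn f (Set.Icc 0 (1/3 : ℝ)) := by
        apply monotoneOn_of_deriv_nonneg (convex_Icc _ _)
        · intro x hx
          exact (hderiv x hx.1).differentiableAt.continuousAt.continuousWithinAt
        · intro x hx
          rw [interior_Icc] at hx
          exact (hderiv x hx.1.le).differentiableAt.differentiableWithinAt
        · intro x hx
          rw [interior_Icc] at hx
          rw [(hderiv x hx.1.le).deriv]
          have h1x : (0:ℝ) < 1 + x := by linarith [hx.1]
          have h2x : (0:ℝ) < 1 + x + x^2 := by nlinarith [hx.1]
          rw [sub_nonneg, div_le_div_iff₀ h2x h1x]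
          have key2 : (20:ℝ)/13 * (1+x+x^2) ≤ c * (1+x+x^2) :=
            mul_le_mul_of_nonneg_right hc20 h2x.le
          nlinarith [hx.1.le, hx.2.le, mul_nonneg (mul_nonneg hx.1.le hx.1.le) hx.1.le]
      have := mono (Set.mem_Icc.mpr ⟨le_refl 0, by norm_num⟩)
        (Set.mem_Icc.mpr ⟨h0, hq⟩) h0
      linarith [hf0 ▸ this]
    rcases le_or_gt q (2/5) with hq' | hq'
    · -- middle interval [1/3, 2/5] : direct estimate
      have hl1 : Real.log ((4:ℝ)/3) ≤ Real.log (1+q) :=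
        Real.log_le_log (by norm_num) (by linarith)
      have hl1pos : (0:ℝ) ≤ Real.log ((4:ℝ)/3) := Real.log_nonneg (by norm_num)
      have hl2 : Real.log (1+q+q^2) ≤ Real.log ((39:ℝ)/25) := by
        apply Real.log_le_log (by nlinarith) (by nlinarith)
      have hcl : (14:ℝ)/9 * Real.log ((4:ℝ)/3) ≤ c * Real.log (1+q) := by
        apply mul_le_mul c_lb hl1 hl1pos (by linarith [c_lb])
      have := hnum
      simp only [hf]
      linarith
    · -- decreasing on [2/5, 1]
      have anti : AntitoneOn f (Set.Icc (2/5 : ℝ) 1) := by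
        apply antitoneOn_of_deriv_nonpos (convex_Icc _ _)
        · intro x hx
          exact (hderiv x (by linarith [hx.1] : (0:ℝ) ≤ x)).differentiableAt.continuousAt.continuousWithinAt
        · intro x hx
          rw [interior_Icc] at hx
          exact (hderiv x (by linarith [hx.1] : (0:ℝ) ≤ x)).differentiableAt.differentiableWithinAt
        · intro x hx
          rw [interior_Icc] at hx
          have hx0 : (0:ℝ) < x := by linarith [hx.1]
          rw [(hderiv x hx0.le).deriv]
          have h1x : (0:ℝ) < 1 + x := by linarith
          have h2x : (0:ℝ) < 1 + x + x^2 := by nlinarith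
          rw [sub_nonpos, div_le_div_iff₀ h1x h2x]
          have key2 : c * (1+x+x^2) ≤ (21:ℝ)/13 * (1+x+x^2) :=
            mul_le_mul_of_nonneg_right c_ub h2x.le
          nlinarith [hx.1.le, hx.2]
      have := anti (Set.mem_Icc.mpr ⟨hq'.le, h1⟩)
        (Set.mem_Icc.mpr ⟨by norm_num, le_refl 1⟩) h1
      linarith [hf1 ▸ this]
  have h1q : (0:ℝ) < 1 + q := by linarith
  have h2q : (0:ℝ) < 1 + q + q^2 := by nlinarith
  calc 1 + q + q^2 = Real.exp (Real.log (1+q+q^2)) := (Real.exp_log h2q).symm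
    _ ≤ Real.exp (Real.log (1+q) * c) := by
        apply Real.exp_le_exp.mpr
        have : f q = c * Real.log (1+q) - Real.log (1+q+q^2) := rfl
        nlinarith [key]
    _ = (1+q) ^ c := (Real.rpow_def_of_pos h1q c).symm

private lemma hP1 : Real.log 6 / Real.log 2 - 1 = Real.log 3 / Real.log 2 := by
  rw [show (6:ℝ) = 2*3 by norm_num, Real.log_mul (by norm_num) (by norm_num),
    add_div, div_self log2_pos.ne']
  ring

private lemma hPpos : 0 < Real.log 6 / Real.log 2 :=
  div_pos (Real.log_pos (by norm_num)) log2_pos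

private lemma hP3 : Real.log 6 / Real.log 2 ≤ 3 := by
  have := c_ub
  have := hP1
  linarith

/-- Scaled version: for `0 < B ≤ A`, `A^p - B^p ≤ (A+B)^(p-1) * (A-B)`. -/
private lemma lemB2 (A B : ℝ) (hB : 0 < B) (hBA : B ≤ A) :
    A ^ (Real.log 6 / Real.log 2) - B ^ (Real.log 6 / Real.log 2) ≤
      (A + B) ^ (Real.log 6 / Real.log 2 - 1) * (A - B) := by
  set P := Real.log 6 / Real.log 2 with hP
  have hA : 0 < A := lt_of_lt_of_le hB hBA
  set t := B / A with ht
  have ht0 : 0 < t := div_pos hB hA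
  have ht1 : t ≤ 1 := (div_le_one hA).mpr hBA
  -- lemma B for t : 1 - t^P ≤ (1+t)^(P-1) * (1-t)
  have hA1 : 1 + t + t^2 ≤ (1+t) ^ (P - 1) := by
    rw [hP, hP1]; exact lemA t ht0.le ht1
  have hstep : 1 - t ^ P ≤ (1+t) ^ (P-1) * (1-t) := by
    have hmul : (1+t+t^2) * (1-t) ≤ (1+t)^(P-1) * (1-t) :=
      mul_le_mul_of_nonneg_right hA1 (by linarith)
    have ht3 : t ^ (3:ℝ) ≤ t ^ P :=
      Real.rpow_le_rpow_of_exponent_ge ht0 ht1 hP3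
    have h3 : t ^ (3:ℝ) = t^(3:ℕ) := by
      rw [← Real.rpow_natCast t 3]; norm_num
    rw [h3] at ht3
    nlinarith [hmul, ht3]
  -- multiply by A^P
  have hAP : (0:ℝ) < A ^ P := Real.rpow_pos_of_pos hA P
  have hmul2 := mul_le_mul_of_nonneg_right hstep hAP.le
  -- rewrite LHS
  have lhs_eq : (1 - t ^ P) * A ^ P = A ^ P - B ^ P := by
    rw [sub_mul, one_mul, ht, Real.div_rpow hB.le hA.le (Real.log 6 / Real.log 2),
      div_mul_cancel₀ _ hAP.ne']
  -- rewrite RHS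
  have hsplit : A ^ P = A ^ (P-1) * A := by
    rw [← Real.rpow_add_one hA.ne' (P-1)]
    norm_num
  have rhs_eq : (1+t) ^ (P-1) * (1-t) * A ^ P = (A+B) ^ (P-1) * (A - B) := by
    rw [hsplit]
    have e1 : (1+t) ^ (P-1) * A ^ (P-1) = (A+B) ^ (P-1) := by
      rw [← Real.mul_rpow (by linarith) hA.le]
      congr 1
      rw [ht]; field_simp
    have e2 : (1-t) * A = A - B := by
      rw [ht]; field_simp
    calc (1+t) ^ (P-1) * (1-t) * (A ^ (P-1) * A)
        = ((1+t) ^ (P-1) * A ^ (P-1)) * ((1-t) * A) := by ring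
      _ = (A+B) ^ (P-1) * (A - B) := by rw [e1, e2]
  rw [lhs_eq, rhs_eq] at hmul2
  exact hmul2

/-- The key one-variable inequality via monotonicity of
`G s = (eˢ+e⁻ˢ)^P - e^{Ps} - e^{-Ps} - 4`. -/
private lemma auxG (u : ℝ) (hu : 1 ≤ u) :
    u ^ (Real.log 6 / Real.log 2) + (u⁻¹) ^ (Real.log 6 / Real.log 2) + 4 ≤
      (u + u⁻¹) ^ (Real.log 6 / Real.log 2) := by
  set P := Real.log 6 / Real.log 2 with hP
  set G : ℝ → ℝ := fun s =>
    (Real.exp s + Real.exp (-s)) ^ P - Real.exp (P*s) - Real.exp (-(P*s)) - 4 with hG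
  have hderiv : ∀ x : ℝ, HasDerivAt G
      ((Real.exp x - Real.exp (-x)) * P * (Real.exp x + Real.exp (-x)) ^ (P-1)
        - Real.exp (P*x) * P + Real.exp (-(P*x)) * P) x := by
    intro x
    have dneg : HasDerivAt (fun s : ℝ => -s) (-1) x := (hasDerivAt_id x).neg
    have d2 : HasDerivAt (fun s : ℝ => Real.exp (-s)) (-Real.exp (-x)) x := by
      have := dneg.exp
      convert this using 1
      ring
    have d1 : HasDerivAt (fun s : ℝ => Real.exp s + Real.exp (-s))
        (Real.exp x + -Real.exp (-x)) x := (Real.hasDerivAt_exp x).add d2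
    have hpos : (0:ℝ) < Real.exp x + Real.exp (-x) := by positivity
    have dpow := d1.rpow_const (p := P) (Or.inl hpos.ne')
    have d3 : HasDerivAt (fun s : ℝ => Real.exp (P*s)) (Real.exp (P*x) * P) x := by
      have := ((hasDerivAt_id x).const_mul P).exp
      refine this.congr_deriv ?_
      simp
    have d4 : HasDerivAt (fun s : ℝ => Real.exp (-(P*s))) (-(Real.exp (-(P*x)) * P)) x := by
      have := (((hasDerivAt_id x).const_mul P).neg).exp
      refine this.congr_deriv ?_
      simp
    have h := ((dpow.sub d3).sub d4).sub_const 4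
    refine h.congr_deriv ?_
    ring
  have hmono : MonotoneOn G (Set.Ici (0:ℝ)) := by
    apply monotoneOn_of_deriv_nonneg (convex_Ici _)
    · intro x _
      exact (hderiv x).differentiableAt.continuousAt.continuousWithinAt
    · intro x _
      exact (hderiv x).differentiableAt.differentiableWithinAt
    · intro x hx
      rw [interior_Ici] at hx
      rw [(hderiv x).deriv]
      have hx0 : (0:ℝ) < x := hx
      set A := Real.exp x with hA
      set B := Real.exp (-x) with hB
      have hApos : 0 < A := Real.exp_pos x
      have hBpos : 0 < B := Real.exp_pos (-x)
      have hBA : B ≤ A := Real.exp_le_exp.mpr (by linarith)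
      have hAP : A ^ P = Real.exp (P*x) := by
        rw [hA, ← Real.exp_mul, mul_comm]
      have hBP : B ^ P = Real.exp (-(P*x)) := by
        rw [hB, ← Real.exp_mul]
        congr 1
        ring
      have hkey := lemB2 A B hBpos hBA
      rw [hAP, hBP] at hkey
      have := mul_le_mul_of_nonneg_right hkey hPpos.le
      nlinarith [this]
  have hG0 : G 0 = 0 := by
    have h2P : (2:ℝ) ^ P = 6 := by
      rw [Real.rpow_def_of_pos (by norm_num : (0:ℝ) < 2), hP, mul_comm,
        div_mul_cancel₀ _ log2_pos.ne', Real.exp_log (by norm_num)]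
    simp only [hG]
    norm_num
    rw [h2P]
    norm_num
  have hu0 : 0 < u := lt_of_lt_of_le one_pos hu
  have hs : 0 ≤ Real.log u := Real.log_nonneg hu
  have h := hmono (Set.self_mem_Ici) (Set.mem_Ici.mpr hs) hs
  rw [hG0] at h
  have e1 : Real.exp (Real.log u) = u := Real.exp_log hu0
  have e2 : Real.exp (-(Real.log u)) = u⁻¹ := by rw [Real.exp_neg, e1]
  have e3 : Real.exp (P * Real.log u) = u ^ P := by
    rw [Real.rpow_def_of_pos hu0, mul_comm]
  have e4 : Real.exp (-(P * Real.log u)) = (u⁻¹) ^ P := by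
    rw [Real.exp_neg, e3, ← Real.inv_rpow hu0.le]
  simp only [hG, e1, e2, e3, e4] at h
  linarith

/-- The ordered version of the statement. -/
private lemma main2 (a b : ℝ) (hb : 0 < b) (hba : b ≤ a) :
    a ^ (Real.log 6 / Real.log 2) +
      4 * (a * b) ^ ((Real.log 6 / Real.log 2) / 2) +
      b ^ (Real.log 6 / Real.log 2) ≤
      (a + b) ^ (Real.log 6 / Real.log 2) := by
  set P := Real.log 6 / Real.log 2 with hP
  have ha : 0 < a := lt_of_lt_of_le hb hba
  set w := Real.sqrt (a/b) with hw
  set m := Real.sqrt (a*b) with hm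
  have hw1 : 1 ≤ w := by
    rw [hw]
    rw [show (1:ℝ) = Real.sqrt 1 by simp]
    exact Real.sqrt_le_sqrt ((one_le_div hb).mpr hba)
  have hw0 : 0 < w := lt_of_lt_of_le one_pos hw1
  have hm0 : 0 < m := Real.sqrt_pos.mpr (by positivity)
  have hwm : w * m = a := by
    rw [hw, hm, ← Real.sqrt_mul (by positivity),
      show a/b*(a*b) = a^2 by field_simp, Real.sqrt_sq ha.le]
  have hwm' : w⁻¹ * m = b := by
    rw [hw, ← Real.sqrt_inv, inv_div, hm, ← Real.sqrt_mul (by positivity),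
      show b/a*(a*b) = b^2 by field_simp, Real.sqrt_sq hb.le]
  have haux := auxG w hw1
  have hmP : (0:ℝ) < m ^ P := Real.rpow_pos_of_pos hm0 P
  have h := mul_le_mul_of_nonneg_right haux hmP.le
  have eA : w ^ P * m ^ P = a ^ P := by
    rw [← Real.mul_rpow hw0.le hm0.le, hwm]
  have eB : (w⁻¹) ^ P * m ^ P = b ^ P := by
    rw [← Real.mul_rpow (by positivity) hm0.le, hwm']
  have eS : (w + w⁻¹) ^ P * m ^ P = (a+b) ^ P := by
    rw [← Real.mul_rpow (by positivity) hm0.le, add_mul, hwm, hwm']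
  have eM : m ^ P = (a*b) ^ (P/2) := by
    rw [hm, Real.sqrt_eq_rpow, ← Real.rpow_mul (by positivity)]
    congr 1
    ring
  rw [add_mul, add_mul, eA, eB, eS, eM] at h
  linarith

theorem stmt_13 (a₀ a₁ : ℝ) (h₀ : 0 ≤ a₀) (h₁ : 0 ≤ a₁) :
    a₀ ^ (Real.log 6 / Real.log 2) +
      4 * (a₀ * a₁) ^ ((Real.log 6 / Real.log 2) / 2) +
      a₁ ^ (Real.log 6 / Real.log 2)
      ≤ (a₀ + a₁) ^ (Real.log 6 / Real.log 2) := by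
  have hPne : Real.log 6 / Real.log 2 ≠ 0 := hPpos.ne'
  have hP2ne : Real.log 6 / Real.log 2 / 2 ≠ 0 := by positivity
  rcases eq_or_lt_of_le h₀ with h₀' | h₀'
  · simp [← h₀', Real.zero_rpow hPne, Real.zero_rpow hP2ne]
  rcases eq_or_lt_of_le h₁ with h₁' | h₁'
  · simp [← h₁', Real.zero_rpow hPne, Real.zero_rpow hP2ne]
  rcases le_total a₁ a₀ with hle | hle
  · exact main2 a₀ a₁ h₁' hle
  · have := main2 a₁ a₀ h₀' hle
    rw [mul_comm a₁ a₀, add_comm a₁ a₀] at this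
    linarith
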